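/- arXiv:1305.5472 — 4 statements merged into one kernel-verified Lean document; each statement's English description precedes it below -/
import Mathlib

section
/- Let G be a group acting by isometries on a metric space X with basepoint p, and let (Xₙ) be a random walk on G (Xₙ = g₁⋯gₙ with i.i.d. increments) which makes linear progress: there is C₀ ≥ 1 with ℙ[d(p, Xₙp) ≤ n/C₀] ≤ C₀ e^{-n/C₀} for all n. Then for every k ≥ 1 and every p ∈ X there exists C₃ such that for all n ≥ 1: ℙ[∃ i, j ≤ n with |i−j| ≥ C₃ log n and d(Xᵢp, Xⱼp) ≤ |i−j|/C₃] ≤ C₃ n^{-k}. -/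
open MeasureTheory

/-- a random walk making linear progress admits, for every `k ≥ 1`, a constant
`C₃` such that the probability that some pair of times `i, j ≤ n` with `|i−j| ≥ C₃ log n`
satisfies `d(Xᵢp, Xⱼp) ≤ |i−j|/C₃` is at most `C₃ n^{-k}`. -/
theorem stmt3 {G X Ω : Type*} [Group G] [MetricSpace X] [MulAction G X]
    [MeasureSpace Ω] (ℙ : Measure Ω) [IsProbabilityMeasure ℙ]
    (Xw : ℕ → Ω → G) (p : X)
    -- stationarity of increments: the law of `d(Xᵢ p, Xⱼ p)` equals the law of `d(p, X_{j-i} p)`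
    (hstat : ∀ i j : ℕ, i ≤ j → ∀ t : ℝ,
      ℙ {ω | dist (Xw i ω • p) (Xw j ω • p) ≤ t} = ℙ {ω | dist p (Xw (j - i) ω • p) ≤ t})
    -- linear progress
    (C₀ : ℝ) (hC₀ : 1 ≤ C₀)
    (hlin : ∀ m : ℕ, ℙ {ω | dist p (Xw m ω • p) ≤ (m : ℝ) / C₀} ≤
      ENNReal.ofReal (C₀ * Real.exp (-(m : ℝ) / C₀)))
    (k : ℕ) (hk : 1 ≤ k) :
    ∃ C₃ : ℝ, 0 < C₃ ∧ ∀ n : ℕ, 1 ≤ n →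
      ℙ {ω | ∃ i ≤ n, ∃ j ≤ n, C₃ * Real.log n ≤ |(i : ℝ) - (j : ℝ)| ∧
          dist (Xw i ω • p) (Xw j ω • p) ≤ |(i : ℝ) - (j : ℝ)| / C₃} ≤
        ENNReal.ofReal (C₃ * (n : ℝ) ^ (-(k : ℝ))) := by
  classical
  have hC₀pos : (0:ℝ) < C₀ := lt_of_lt_of_le one_pos hC₀
  have hk4 : (4:ℝ) ≤ (k:ℝ) + 3 := by
    have : (1:ℝ) ≤ (k:ℝ) := by exact_mod_cast hk
    linarith
  refine ⟨((k:ℝ) + 3) * C₀, by positivity, ?_⟩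
  intro n hn
  set C₃ : ℝ := ((k:ℝ) + 3) * C₀ with hC₃def
  have hnpos : (0:ℝ) < n := by exact_mod_cast hn
  have hC₃C₀ : C₀ ≤ C₃ := by nlinarith
  have hC₃pos : 0 < C₃ := by positivity
  set A : ℕ → ℕ → Set Ω := fun i j => {ω | C₃ * Real.log n ≤ |(i : ℝ) - (j : ℝ)| ∧
      dist (Xw i ω • p) (Xw j ω • p) ≤ |(i : ℝ) - (j : ℝ)| / C₃} with hA
  have hsub : {ω | ∃ i ≤ n, ∃ j ≤ n, C₃ * Real.log n ≤ |(i : ℝ) - (j : ℝ)| ∧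
          dist (Xw i ω • p) (Xw j ω • p) ≤ |(i : ℝ) - (j : ℝ)| / C₃} ⊆
      ⋃ i ∈ Finset.range (n+1), ⋃ j ∈ Finset.range (n+1), A i j := by
    rintro ω ⟨i, hi, j, hj, h1, h2⟩
    simp only [Set.mem_iUnion, Finset.mem_range]
    exact ⟨i, Nat.lt_succ_of_le hi, j, Nat.lt_succ_of_le hj, h1, h2⟩
  have key : ∀ i j : ℕ, i ≤ j →
      ℙ (A i j) ≤ ENNReal.ofReal (C₀ * (n : ℝ) ^ (-((k:ℝ)+3))) := by
    intro i j hij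
    by_cases hc : C₃ * Real.log n ≤ |(i : ℝ) - (j : ℝ)|
    · have hmr : (((j - i : ℕ)):ℝ) = |(i : ℝ) - (j : ℝ)| := by
        rw [abs_sub_comm, abs_of_nonneg (sub_nonneg.2 (by exact_mod_cast hij)),
          Nat.cast_sub hij]
      have step1 : A i j ⊆ {ω | dist (Xw i ω • p) (Xw j ω • p) ≤ ((j - i : ℕ):ℝ) / C₀} := by
        rintro ω ⟨-, h2⟩
        refine le_trans h2 ?_
        rw [← hmr]
        exact div_le_div_of_nonneg_left (by positivity) hC₀pos hC₃C₀
      calc ℙ (A i j) ≤ ℙ {ω | dist (Xw i ω • p) (Xw j ω • p) ≤ ((j - i : ℕ):ℝ) / C₀} :=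
            measure_mono step1
        _ = ℙ {ω | dist p (Xw (j - i) ω • p) ≤ ((j - i : ℕ):ℝ) / C₀} := hstat i j hij _
        _ ≤ ENNReal.ofReal (C₀ * Real.exp (-((j - i : ℕ):ℝ) / C₀)) := hlin (j - i)
        _ ≤ _ := by
            apply ENNReal.ofReal_le_ofReal
            apply mul_le_mul_of_nonneg_left _ (le_of_lt hC₀pos)
            rw [Real.rpow_def_of_pos hnpos]
            apply Real.exp_le_exp.2
            have hcm : (((k:ℝ)+3) * C₀) * Real.log n ≤ ((j - i : ℕ):ℝ) := by
              rw [hmr]; exact hc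
            have h1 : (((k:ℝ)+3)) * Real.log n ≤ ((j - i : ℕ):ℝ) / C₀ := by
              rw [le_div_iff₀ hC₀pos]; nlinarith
            have h2 : -((j - i : ℕ):ℝ) / C₀ = -(((j - i : ℕ):ℝ) / C₀) := by ring
            have h3 : Real.log n * (-((k:ℝ)+3)) = -((((k:ℝ)+3)) * Real.log n) := by ring
            rw [h2, h3]
            exact neg_le_neg h1
    · have hempty : A i j = ∅ := by
        ext ω
        simp only [hA, Set.mem_setOf_eq, Set.mem_empty_iff_false, iff_false]
        tauto
      simp [hempty]
  have key2 : ∀ i j : ℕ,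
      ℙ (A i j) ≤ ENNReal.ofReal (C₀ * (n : ℝ) ^ (-((k:ℝ)+3))) := by
    intro i j
    rcases le_total i j with h | h
    · exact key i j h
    · have hAeq : A i j = A j i := by
        ext ω
        simp only [hA, Set.mem_setOf_eq]
        rw [abs_sub_comm, dist_comm]
      rw [hAeq]; exact key j i h
  have hrpow : (n:ℝ) ^ (-((k:ℝ)+3)) = (n:ℝ) ^ (-(k:ℝ)) * ((n:ℝ) ^ (3:ℕ))⁻¹ := by
    have h3 : (n:ℝ) ^ (-((3:ℕ):ℝ)) = ((n:ℝ) ^ (3:ℕ))⁻¹ := by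
      rw [Real.rpow_neg hnpos.le, Real.rpow_natCast]
    rw [show -((k:ℝ)+3) = -(k:ℝ) + (-((3:ℕ):ℝ)) by push_cast; ring,
      Real.rpow_add hnpos, h3]
  have hreal : (((n+1) * (n+1) : ℕ) : ℝ) * (C₀ * (n:ℝ) ^ (-((k:ℝ)+3))) ≤
      C₃ * (n:ℝ) ^ (-(k:ℝ)) := by
    have ht : (0:ℝ) ≤ (n:ℝ) ^ (-(k:ℝ)) := Real.rpow_nonneg hnpos.le _
    have h4 : (((n:ℝ)+1) * ((n:ℝ)+1)) * ((n:ℝ) ^ (3:ℕ))⁻¹ ≤ (k:ℝ) + 3 := by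
      rw [← div_eq_mul_inv, div_le_iff₀ (by positivity)]
      have hn1 : (1:ℝ) ≤ (n:ℝ) := by exact_mod_cast hn
      have hcube : (n:ℝ)^2 ≤ (n:ℝ)^3 := by nlinarith
      have h40 : ((n:ℝ)+1)*((n:ℝ)+1) ≤ 4 * (n:ℝ)^3 := by nlinarith
      nlinarith [mul_nonneg (by linarith : (0:ℝ) ≤ (k:ℝ)+3-4)
        (pow_nonneg hnpos.le 3)]
    push_cast
    rw [hrpow]
    calc ((n:ℝ)+1) * ((n:ℝ)+1) * (C₀ * ((n:ℝ) ^ (-(k:ℝ)) * ((n:ℝ) ^ (3:ℕ))⁻¹))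
        = (C₀ * (n:ℝ) ^ (-(k:ℝ))) * ((((n:ℝ)+1) * ((n:ℝ)+1)) * ((n:ℝ) ^ (3:ℕ))⁻¹) := by
          ring
      _ ≤ (C₀ * (n:ℝ) ^ (-(k:ℝ))) * ((k:ℝ) + 3) :=
          mul_le_mul_of_nonneg_left h4 (by positivity)
      _ = C₃ * (n:ℝ) ^ (-(k:ℝ)) := by rw [hC₃def]; ring
  calc ℙ {ω | ∃ i ≤ n, ∃ j ≤ n, C₃ * Real.log n ≤ |(i : ℝ) - (j : ℝ)| ∧
          dist (Xw i ω • p) (Xw j ω • p) ≤ |(i : ℝ) - (j : ℝ)| / C₃}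
      ≤ ℙ (⋃ i ∈ Finset.range (n+1), ⋃ j ∈ Finset.range (n+1), A i j) :=
        measure_mono hsub
    _ ≤ ∑ i ∈ Finset.range (n+1), ℙ (⋃ j ∈ Finset.range (n+1), A i j) :=
        measure_biUnion_finset_le _ _
    _ ≤ ∑ i ∈ Finset.range (n+1), ∑ j ∈ Finset.range (n+1), ℙ (A i j) :=
        Finset.sum_le_sum fun i _ => measure_biUnion_finset_le _ _
    _ ≤ ∑ i ∈ Finset.range (n+1), ∑ j ∈ Finset.range (n+1),
          ENNReal.ofReal (C₀ * (n : ℝ) ^ (-((k:ℝ)+3))) :=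
        Finset.sum_le_sum fun i _ => Finset.sum_le_sum fun j _ => key2 i j
    _ = (((n+1) * (n+1) : ℕ) : ENNReal) * ENNReal.ofReal (C₀ * (n : ℝ) ^ (-((k:ℝ)+3))) := by
        simp [Finset.sum_const, Finset.card_range, mul_assoc]
    _ ≤ ENNReal.ofReal (C₃ * (n : ℝ) ^ (-(k:ℝ))) := by
        rw [← ENNReal.ofReal_natCast ((n+1)*(n+1)), ← ENNReal.ofReal_mul (by positivity)]
        exact ENNReal.ofReal_le_ofReal hreal
end

section
/- Let X be a geodesic space hyperbolic relative to a collection 𝒫 of peripheral subsets, with coarse closest point projections π_P satisfying: (i) diam(π_P(Q)) ≤ C for distinct P, Q ∈ 𝒫, and (ii) if d(π_P(x), π_P(y)) ≥ C then every geodesic [x,y] passes within C of both π_P(x) and π_P(y). Then there exists B such that for all distinct P, Q ∈ 𝒫 and all x ∈ X: min{ d(π_P(x), π_P(Q)), d(π_Q(x), π_Q(P)) } ≤ B. -/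
/-- `f` parametrizes a geodesic segment from `x` to `y` (by arclength on `[0, dist x y]`). -/
def IsGeodesicSegment {X : Type*} [MetricSpace X] (f : ℝ → X) (x y : X) : Prop :=
  f 0 = x ∧ f (dist x y) = y ∧
    ∀ s ∈ Set.Icc (0:ℝ) (dist x y), ∀ t ∈ Set.Icc (0:ℝ) (dist x y),
      dist (f s) (f t) = |s - t|

/-- the Behrstock-type projections estimate for closest point projections onto
peripheral sets of a relatively hyperbolic space. -/
theorem stmt6 {X : Type*} [MetricSpace X]
    (geo : ∀ x y : X, ∃ f : ℝ → X, IsGeodesicSegment f x y)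
    (Ps : Set (Set X)) (π : Set X → X → X)
    -- coarse closest point projections
    (hproj : ∀ P ∈ Ps, ∀ x : X, π P x ∈ P ∧ dist x (π P x) ≤ Metric.infDist x P + 1)
    (C : ℝ) (hC : 0 < C)
    -- (i) bounded projections of one peripheral set onto another
    (hi : ∀ P ∈ Ps, ∀ Q ∈ Ps, P ≠ Q → Metric.diam (π P '' Q) ≤ C)
    -- (ii) far projections force geodesics to pass close to both projection points
    (hii : ∀ x y : X, ∀ P ∈ Ps, C ≤ dist (π P x) (π P y) →
      ∀ f : ℝ → X, IsGeodesicSegment f x y →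
        Metric.infDist (π P x) (f '' Set.Icc (0:ℝ) (dist x y)) ≤ C ∧
        Metric.infDist (π P y) (f '' Set.Icc (0:ℝ) (dist x y)) ≤ C) :
    ∃ B : ℝ, ∀ P ∈ Ps, ∀ Q ∈ Ps, P ≠ Q → ∀ x : X,
      min (Metric.infDist (π P x) (π P '' Q)) (Metric.infDist (π Q x) (π Q '' P)) ≤ B := by
  refine ⟨4*C+5, fun P hP Q hQ hne x => ?_⟩
  by_contra h
  push_neg at h
  rw [lt_min_iff] at h
  obtain ⟨hA, hB⟩ := h
  have hpP : π P x ∈ P := (hproj P hP x).1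
  have hqQ : π Q x ∈ Q := (hproj Q hQ x).1
  have hA' : (4*C+5 : ℝ) < dist (π P x) (π P (π Q x)) :=
    lt_of_lt_of_le hA (Metric.infDist_le_dist_of_mem ⟨π Q x, hqQ, rfl⟩)
  have hB' : (4*C+5 : ℝ) < dist (π Q x) (π Q (π P x)) :=
    lt_of_lt_of_le hB (Metric.infDist_le_dist_of_mem ⟨π P x, hpP, rfl⟩)
  obtain ⟨f, hf⟩ := geo x (π Q x)
  obtain ⟨g, hg⟩ := geo (π P x) x
  -- geodesic [x, q] passes within C of p = π P x
  have hCf : C ≤ dist (π P x) (π P (π Q x)) := by linarith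
  have h1 := (hii x (π Q x) P hP hCf f hf).1
  -- geodesic [p, x] passes within C of q = π Q x
  have hCg : C ≤ dist (π Q (π P x)) (π Q x) := by rw [dist_comm]; linarith
  have h2 := (hii (π P x) x Q hQ hCg g hg).2
  -- extract near points
  have hfne : (f '' Set.Icc (0:ℝ) (dist x (π Q x))).Nonempty :=
    (Set.nonempty_Icc.2 dist_nonneg).image f
  have hgne : (g '' Set.Icc (0:ℝ) (dist (π P x) x)).Nonempty :=
    (Set.nonempty_Icc.2 dist_nonneg).image g
  obtain ⟨z, hz, hzd⟩ := (Metric.infDist_lt_iff hfne).1 (lt_of_le_of_lt h1 (lt_add_one C))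
  obtain ⟨v, hv, hvd⟩ := (Metric.infDist_lt_iff hgne).1 (lt_of_le_of_lt h2 (lt_add_one C))
  obtain ⟨t, ht, rfl⟩ := hz
  obtain ⟨s, hs, rfl⟩ := hv
  -- distances along the geodesics
  have e1 : dist x (f t) + dist (f t) (π Q x) = dist x (π Q x) := by
    have h0 : dist (f 0) (f t) = |0 - t| :=
      hf.2.2 0 ⟨le_refl _, dist_nonneg⟩ t ht
    have h1' : dist (f t) (f (dist x (π Q x))) = |t - dist x (π Q x)| :=
      hf.2.2 t ht (dist x (π Q x)) ⟨dist_nonneg, le_refl _⟩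
    rw [hf.1] at h0
    rw [hf.2.1] at h1'
    rw [h0, h1', abs_of_nonpos (by linarith [ht.1]), abs_of_nonpos (by linarith [ht.2])]
    ring
  have e2 : dist (π P x) (g s) + dist (g s) x = dist (π P x) x := by
    have h0 : dist (g 0) (g s) = |0 - s| :=
      hg.2.2 0 ⟨le_refl _, dist_nonneg⟩ s hs
    have h1' : dist (g s) (g (dist (π P x) x)) = |s - dist (π P x) x| :=
      hg.2.2 s hs (dist (π P x) x) ⟨dist_nonneg, le_refl _⟩
    rw [hg.1] at h0
    rw [hg.2.1] at h1'
    rw [h0, h1', abs_of_nonpos (by linarith [hs.1]), abs_of_nonpos (by linarith [hs.2])]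
    ring
  -- triangle inequalities
  have t1 : dist x (π P x) ≤ dist x (f t) + dist (f t) (π P x) := dist_triangle _ _ _
  have t2 : dist (π P x) (π Q x) ≤ dist (π P x) (f t) + dist (f t) (π Q x) :=
    dist_triangle _ _ _
  have t3 : dist (π P x) (π Q x) ≤ dist (π P x) (g s) + dist (g s) (π Q x) :=
    dist_triangle _ _ _
  have t4 : dist (π Q x) x ≤ dist (π Q x) (g s) + dist (g s) x := dist_triangle _ _ _
  have c1 : dist (π P x) (f t) = dist (f t) (π P x) := dist_comm _ _
  have c2 : dist (π Q x) (g s) = dist (g s) (π Q x) := dist_comm _ _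
  have c3 : dist x (π P x) = dist (π P x) x := dist_comm _ _
  have c4 : dist x (π Q x) = dist (π Q x) x := dist_comm _ _
  -- conclude d(p,q) small
  have hpq : dist (π P x) (π Q x) < 2*C + 2 := by linarith
  -- final contradiction
  have h5 : dist (π Q x) (π P (π Q x)) ≤ Metric.infDist (π Q x) P + 1 :=
    (hproj P hP (π Q x)).2
  have h6 : Metric.infDist (π Q x) P ≤ dist (π Q x) (π P x) :=
    Metric.infDist_le_dist_of_mem hpP
  have h7 : dist (π P x) (π P (π Q x)) ≤
      dist (π P x) (π Q x) + dist (π Q x) (π P (π Q x)) := dist_triangle _ _ _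
  have c5 : dist (π Q x) (π P x) = dist (π P x) (π Q x) := dist_comm _ _
  linarith
end

section
/- Let q ≥ 0 and r ∈ (0,1) with q_{l+K'} ≤ K'(q_{l−K'} − q_{l+K'}) for all l ≥ 2K', where q is non-increasing on ℝ≥0 with values in [0,1]. Then for every t ≥ K', q_t ≤ (1 + 1/K')^{-(t−K')/(2K') + 1}. In particular there exists K depending only on K' such that q_t ≤ K e^{-t/K} for all t ≥ 0. -/
/-- from the recursion `q_{l+K'} ≤ K'(q_{l−K'} − q_{l+K'})` for a
non-increasing `q : ℝ≥0 → [0,1]`, one gets the interpolated geometric bound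
`q_t ≤ (1+1/K')^{-(t−K')/(2K') + 1}` for `t ≥ K'`, and hence an exponential tail bound
`q_t ≤ K e^{-t/K}` with `K` depending only on `K'`. -/
theorem stmt15 (q : ℝ → ℝ) (hmono : ∀ s t : ℝ, 0 ≤ s → s ≤ t → q t ≤ q s)
    (hrange : ∀ t : ℝ, 0 ≤ t → q t ∈ Set.Icc (0:ℝ) 1)
    (K' : ℝ) (hK' : 1 ≤ K')
    (hrec : ∀ l : ℝ, 2 * K' ≤ l → q (l + K') ≤ K' * (q (l - K') - q (l + K'))) :
    (∀ t : ℝ, K' ≤ t → q t ≤ (1 + 1 / K') ^ (-(t - K') / (2 * K') + 1)) ∧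
    ∃ K : ℝ, 0 < K ∧ ∀ t : ℝ, 0 ≤ t → q t ≤ K * Real.exp (-t / K) := by
  have hK0 : (0:ℝ) < K' := lt_of_lt_of_le one_pos hK'
  set x : ℝ := 1 + 1 / K' with hxdef
  have hx1 : 1 < x := by
    have : 0 < 1 / K' := by positivity
    simp only [hxdef]; linarith
  have hx0 : (0:ℝ) < x := lt_trans one_pos hx1
  have hr : x⁻¹ = K' / (1 + K') := by
    rw [hxdef]
    field_simp
    ring
  have key : ∀ n : ℕ, q ((2 * (n:ℝ) + 1) * K') ≤ x⁻¹ ^ n := by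
    intro n
    induction n with
    | zero =>
      have h := (hrange K' hK0.le).2
      simpa using h
    | succ n ih =>
      have hn : (0:ℝ) ≤ (n:ℝ) := Nat.cast_nonneg n
      have hl : 2 * K' ≤ (2 * (n:ℝ) + 2) * K' := by nlinarith
      have h := hrec ((2 * (n:ℝ) + 2) * K') hl
      have e1 : (2 * (n:ℝ) + 2) * K' + K' = (2 * ((n:ℝ) + 1) + 1) * K' := by ring
      have e2 : (2 * (n:ℝ) + 2) * K' - K' = (2 * (n:ℝ) + 1) * K' := by ring
      rw [e1, e2] at h
      have hpos : (0:ℝ) < 1 + K' := by linarith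
      have hq1 : q ((2 * ((n:ℝ) + 1) + 1) * K') ≤ K' / (1 + K') * q ((2 * (n:ℝ) + 1) * K') := by
        rw [div_mul_eq_mul_div, le_div_iff₀ hpos]
        nlinarith [h]
      have hqnn : 0 ≤ q ((2 * (n:ℝ) + 1) * K') := by
        have : (0:ℝ) ≤ (2 * (n:ℝ) + 1) * K' := by positivity
        exact (hrange _ this).1
      have hstep : K' / (1 + K') * q ((2 * (n:ℝ) + 1) * K') ≤ x⁻¹ * x⁻¹ ^ n := by
        rw [← hr]
        have hfac : (0:ℝ) ≤ x⁻¹ := by positivity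
        exact mul_le_mul_of_nonneg_left ih hfac
      have : q ((2 * ((n:ℝ) + 1) + 1) * K') ≤ x⁻¹ ^ (n + 1) := by
        rw [pow_succ']
        exact le_trans hq1 hstep
      have ecast : (2 * ((n:ℕ) + 1 : ℕ) + 1 : ℝ) = 2 * ((n:ℝ) + 1) + 1 := by push_cast; ring
      rw [show ((2:ℝ) * ((n:ℕ) + 1 : ℕ) + 1) * K' = (2 * ((n:ℝ) + 1) + 1) * K' by push_cast; ring]
      exact this
  have hbd : ∀ t : ℝ, K' ≤ t → q t ≤ x ^ (-(t - K') / (2 * K') + 1) := by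
    intro t ht
    have h2K : (0:ℝ) < 2 * K' := by linarith
    have htK : 0 ≤ (t - K') / (2 * K') := div_nonneg (by linarith) h2K.le
    set n := ⌊(t - K') / (2 * K')⌋₊ with hndef
    have h1 : (n:ℝ) ≤ (t - K') / (2 * K') := Nat.floor_le htK
    have h2 : (t - K') / (2 * K') < (n:ℝ) + 1 := Nat.lt_floor_add_one _
    have hpt : (2 * (n:ℝ) + 1) * K' ≤ t := by
      have := (le_div_iff₀ h2K).1 h1
      nlinarith
    have hptnn : (0:ℝ) ≤ (2 * (n:ℝ) + 1) * K' := by positivity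
    have hq := hmono ((2 * (n:ℝ) + 1) * K') t hptnn hpt
    have hxn : x⁻¹ ^ n = x ^ (-(n:ℝ)) := by
      rw [Real.rpow_neg hx0.le, Real.rpow_natCast, inv_pow]
    have hexp : -(n:ℝ) ≤ -(t - K') / (2 * K') + 1 := by
      have hnd : -(t - K') / (2 * K') = -((t - K') / (2 * K')) := by ring
      rw [hnd]
      linarith
    calc q t ≤ q ((2 * (n:ℝ) + 1) * K') := hq
      _ ≤ x⁻¹ ^ n := key n
      _ = x ^ (-(n:ℝ)) := hxn
      _ ≤ x ^ (-(t - K') / (2 * K') + 1) := Real.rpow_le_rpow_of_exponent_le hx1.le hexp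
  refine ⟨hbd, ?_⟩
  have hlx : 0 < Real.log x := Real.log_pos hx1
  set K : ℝ := max (Real.exp 1 + K') (Real.exp (2 * Real.log x) + 2 * K' / Real.log x)
    with hKdef
  have hKpos : 0 < K := lt_of_lt_of_le (by positivity) (le_max_left _ _)
  have hKe : Real.exp 1 ≤ K := le_trans (by linarith) (le_max_left _ _)
  have hKK' : K' ≤ K := by
    have : K' ≤ Real.exp 1 + K' := by
      have := Real.exp_pos 1; linarith
    exact le_trans this (le_max_left _ _)
  have hK15 : Real.exp (3 / 2 * Real.log x) ≤ K := by
    have h1 : Real.exp (3 / 2 * Real.log x) ≤ Real.exp (2 * Real.log x) :=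
      Real.exp_le_exp.2 (by nlinarith)
    have h2 : Real.exp (2 * Real.log x) ≤ Real.exp (2 * Real.log x) + 2 * K' / Real.log x := by
      have : 0 < 2 * K' / Real.log x := by positivity
      linarith
    exact le_trans (le_trans h1 h2) (le_max_right _ _)
  have hKc : 2 * K' / Real.log x ≤ K := by
    have : 2 * K' / Real.log x ≤ Real.exp (2 * Real.log x) + 2 * K' / Real.log x := by
      have := Real.exp_pos (2 * Real.log x); linarith
    exact le_trans this (le_max_right _ _)
  refine ⟨K, hKpos, ?_⟩
  intro t ht
  by_cases hcase : t ≤ K'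
  · have hq1 : q t ≤ 1 := (hrange t ht).2
    have h1 : -1 ≤ -t / K := by
      rw [neg_div, neg_le_neg_iff]
      rw [div_le_one hKpos]
      linarith
    have h2 : Real.exp (-1) ≤ Real.exp (-t / K) := Real.exp_le_exp.2 h1
    have he : Real.exp 1 * Real.exp (-1) = 1 := by
      rw [← Real.exp_add]; simp
    have h3 : (1:ℝ) ≤ K * Real.exp (-t / K) := by
      nlinarith [Real.exp_pos (-t / K), Real.exp_pos (-1)]
    linarith
  · push_neg at hcase
    have h := hbd t hcase.le
    have hrw : x ^ (-(t - K') / (2 * K') + 1)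
        = Real.exp (3 / 2 * Real.log x) * Real.exp (-(t * (Real.log x / (2 * K')))) := by
      rw [Real.rpow_def_of_pos hx0, ← Real.exp_add]
      congr 1
      field_simp
      ring
    have hc : 1 / K ≤ Real.log x / (2 * K') := by
      rw [div_le_div_iff₀ hKpos (by positivity)]
      rw [div_le_iff₀ hlx] at hKc
      linarith
    have hexp2 : Real.exp (-(t * (Real.log x / (2 * K')))) ≤ Real.exp (-t / K) := by
      apply Real.exp_le_exp.2
      have hmm : t / K ≤ t * (Real.log x / (2 * K')) := by
        have := mul_le_mul_of_nonneg_left hc ht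
        calc t / K = t * (1 / K) := by ring
          _ ≤ t * (Real.log x / (2 * K')) := this
      rw [neg_div] at *
      linarith
    calc q t ≤ x ^ (-(t - K') / (2 * K') + 1) := h
      _ = Real.exp (3 / 2 * Real.log x) * Real.exp (-(t * (Real.log x / (2 * K')))) := hrw
      _ ≤ K * Real.exp (-t / K) :=
          mul_le_mul hK15 hexp2 (Real.exp_pos _).le hKpos.le
end

section
/- Let X be a geodesic space hyperbolic relative to 𝒫 with transient/deep decomposition satisfying the Relative Rips condition: there exist μ, R, D such that for all x, y, z ∈ X, trans([x,y]) ⊆ N_D(trans([x,z]) ∪ trans([z,y])). Then for every discrete path α = (a₀, …, a_m) from x to y with consecutive points at distance ≤ 1, and every p ∈ trans([x,y]), we have d(p, α) ≤ C₁ log₂(m + 1) + C₁, where C₁ depends only on D. -/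
/-- Lemma `div`. Under the Relative Rips condition for transient sets,
every transient point of a geodesic `[x,y]` is within `C₁ log₂(m+1) + C₁` of any discrete
path `a₀, …, a_m` from `x` to `y` with unit-speed steps, where `C₁` depends only on `D`. -/
theorem stmt16 {X : Type*} [MetricSpace X]
    (trans : X → X → Set X)
    -- transient points lie on a geodesic between the endpoints
    (hgeo : ∀ x y : X, ∀ p ∈ trans x y, dist x p + dist p y = dist x y)
    (D : ℝ) (hD : 0 ≤ D)
    -- Relative Rips condition
    (hrips : ∀ x y z : X, ∀ p ∈ trans x y,
      ∃ p' ∈ trans x z ∪ trans z y, dist p p' ≤ D) :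
    ∃ C₁ : ℝ, 0 < C₁ ∧ ∀ (m : ℕ) (a : ℕ → X) (x y : X),
      a 0 = x → a m = y → (∀ i < m, dist (a i) (a (i + 1)) ≤ 1) →
      ∀ p ∈ trans x y,
        Metric.infDist p (a '' {i : ℕ | i ≤ m}) ≤ C₁ * Real.logb 2 (m + 1) + C₁ := by
  have hL : 0 < Real.logb 2 (4/3) := Real.logb_pos (by norm_num) (by norm_num)
  set L := Real.logb 2 (4/3) with hLdef
  refine ⟨3 + D / L, by positivity, ?_⟩
  set C := 3 + D / L with hCdef
  have hC3 : (3:ℝ) ≤ C := by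
    have h : 0 ≤ D / L := div_nonneg hD hL.le
    rw [hCdef]; linarith
  have hC0 : (0:ℝ) ≤ C := by linarith
  have hCL : D ≤ C * L := by
    have h1 : C * L = 3 * L + D := by
      rw [hCdef]; field_simp
    nlinarith
  intro m
  induction m using Nat.strong_induction_on with
  | _ m ih =>
    intro a x y hx hy hstep p hp
    have hlog0 : 0 ≤ Real.logb 2 ((m:ℝ)+1) :=
      Real.logb_nonneg (by norm_num) (by have := Nat.cast_nonneg (α := ℝ) m; linarith)
    have htel : ∀ n : ℕ, (∀ i < n, dist (a i) (a (i+1)) ≤ 1) → dist (a 0) (a n) ≤ n := by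
      intro n
      induction n with
      | zero => simp
      | succ n ihn =>
        intro h
        have h1 := ihn (fun i hi => h i (Nat.lt_succ_of_lt hi))
        have h2 := h n (Nat.lt_succ_self n)
        calc dist (a 0) (a (n+1)) ≤ dist (a 0) (a n) + dist (a n) (a (n+1)) :=
              dist_triangle _ _ _
          _ ≤ (n:ℝ) + 1 := by linarith
          _ = ((n+1 : ℕ) : ℝ) := by push_cast; ring
    by_cases hm : m ≤ 3
    · -- base case
      have hdxy : dist x y ≤ m := by
        have := htel m hstep
        rwa [hx, hy] at this
      have hmem : x ∈ a '' {i : ℕ | i ≤ m} := ⟨0, by simp, hx⟩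
      have h1 : Metric.infDist p (a '' {i : ℕ | i ≤ m}) ≤ dist p x :=
        Metric.infDist_le_dist_of_mem hmem
      have h2 := hgeo x y p hp
      have h3 : dist p x ≤ (m:ℝ) := by
        rw [dist_comm]
        have := dist_nonneg (x := p) (y := y)
        linarith
      have hm3 : (m:ℝ) ≤ 3 := by exact_mod_cast hm
      nlinarith
    · -- inductive step: m ≥ 4
      push_neg at hm
      set k := (m+1)/2 with hkdef
      have hk1 : k < m := by omega
      have hk2 : m - k < m := by omega
      have hmk : m - k ≤ k := by omega
      have hz := hrips x y (a k) p hp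
      obtain ⟨p', hp'mem, hdpp'⟩ := hz
      -- common arithmetic: logb 2 (k+1) + L ≤ logb 2 (m+1)
      have hkb : 4*k + 1 ≤ 3*m := by omega
      have hlogk : Real.logb 2 ((k:ℝ)+1) + L ≤ Real.logb 2 ((m:ℝ)+1) := by
        have hprod : ((k:ℝ)+1) * (4/3) ≤ (m:ℝ)+1 := by
          have : (4:ℝ)*k + 1 ≤ 3*m := by exact_mod_cast hkb
          linarith
        have hkpos : (0:ℝ) < (k:ℝ)+1 := by positivity
        have := (Real.logb_le_logb (b := 2) (by norm_num)
          (x := ((k:ℝ)+1) * (4/3)) (y := (m:ℝ)+1) (by positivity)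
          (by positivity)).mpr hprod
        rwa [Real.logb_mul (by positivity) (by norm_num)] at this
      -- in both cases, find a suitable subpath
      have key : ∃ K : ℕ, K ≤ k ∧ ∃ S : Set X, S ⊆ a '' {i : ℕ | i ≤ m} ∧
          Metric.infDist p' S ≤ C * Real.logb 2 ((K:ℝ)+1) + C ∧ S.Nonempty := by
        rcases hp'mem with hp' | hp'
        · refine ⟨k, le_rfl, a '' {i : ℕ | i ≤ k}, ?_, ?_, ⟨a 0, ⟨0, by simp, rfl⟩⟩⟩
          · exact Set.image_mono (fun i hi => le_trans hi hk1.le)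
          · exact ih k hk1 a x (a k) hx rfl (fun i hi => hstep i (by omega)) p' hp'
        · refine ⟨m - k, hmk, (fun i => a (k + i)) '' {i : ℕ | i ≤ m - k}, ?_, ?_,
            ⟨a (k+0), ⟨0, by simp, rfl⟩⟩⟩
          · rintro _ ⟨i, hi, rfl⟩
            exact ⟨k + i, by simp at hi ⊢; omega, rfl⟩
          · exact ih (m - k) hk2 (fun i => a (k + i)) (a k) y (by simp)
              (by show a (k + (m - k)) = y; rw [Nat.add_sub_cancel' (by omega : k ≤ m)]; exact hy)
              (fun i hi => by
                have := hstep (k + i) (by omega)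
                simpa [Nat.add_assoc] using this) p' hp'
      obtain ⟨K, hKk, S, hSsub, hSd, hSne⟩ := key
      have h1 : Metric.infDist p (a '' {i : ℕ | i ≤ m}) ≤ Metric.infDist p S :=
        Metric.infDist_le_infDist_of_subset hSsub hSne
      have h2 : Metric.infDist p S ≤ Metric.infDist p' S + dist p p' :=
        Metric.infDist_le_infDist_add_dist
      have hlogK : Real.logb 2 ((K:ℝ)+1) ≤ Real.logb 2 ((k:ℝ)+1) :=
        Real.logb_le_logb_of_le (by norm_num) (by positivity)
          (by
            have hh : (K:ℝ) ≤ (k:ℝ) := by exact_mod_cast hKk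
            linarith)
      have : C * Real.logb 2 ((K:ℝ)+1) ≤ C * (Real.logb 2 ((m:ℝ)+1) - L) := by
        apply mul_le_mul_of_nonneg_left _ hC0
        linarith
      push_cast at *
      nlinarith
end
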